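/- Let G be a finite simple graph with positive vertex weights w, let k ≥ 0 be an integer, and let F ⊆ V(G) be nonempty. Let v be a degree-1 vertex of G with unique neighbor u, and suppose F ≠ {v}. Then every maximum-weight k-secluded supertree H of F in G contains u if and only if it contains v. -/

import Mathlib

namespace Secluded

open SimpleGraph

variable {V : Type*}

/-- The open neighborhood of a vertex set `S`: vertices outside `S` with a neighbor in `S`. -/
def openNbhd (G : SimpleGraph V) (S : Set V) : Set V :=
  {v | v ∉ S ∧ ∃ u ∈ S, G.Adj v u}

/-- The graph obtained from `G` by deleting the vertices in `D`
(kept on the same vertex type; deleted vertices become isolated). -/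
def gdelete (G : SimpleGraph V) (D : Set V) : SimpleGraph V where
  Adj x y := G.Adj x y ∧ x ∉ D ∧ y ∉ D
  symm := ⟨fun _ _ h => ⟨h.1.symm, h.2.2, h.2.1⟩⟩
  loopless := ⟨fun _ h => G.irrefl h.1⟩

/-- `S` induces a tree (connected and acyclic induced subgraph) in `G`. -/
def IsInducedTree (G : SimpleGraph V) (S : Set V) : Prop :=
  (G.induce S).IsTree

/-- `S` is a `k`-secluded tree in `G`. -/
def IsSecludedTree (G : SimpleGraph V) (k : ℕ) (S : Set V) : Prop :=
  IsInducedTree G S ∧ (openNbhd G S).ncard ≤ k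

/-- The set of `k`-secluded supertrees of `F` in `G`. -/
def secl (G : SimpleGraph V) (k : ℕ) (F : Set V) : Set (Set V) :=
  {S | IsSecludedTree G k S ∧ F ⊆ S}

/-- Total weight of a vertex set. -/
noncomputable def weight (w : V → ℕ) (S : Set V) : ℕ := ∑ᶠ x ∈ S, w x

/-- The maximum-weight elements of a collection of vertex sets. -/
def maxset (w : V → ℕ) (X : Set (Set V)) : Set (Set V) :=
  {S | S ∈ X ∧ ∀ S' ∈ X, weight w S' ≤ weight w S}

/-- `S` consists of exactly one vertex from each member of `𝒳`. -/
def IsTransversal (𝒳 : Set (Set V)) (S : Set V) : Prop :=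
  S ⊆ ⋃₀ 𝒳 ∧ ∀ X ∈ 𝒳, (S ∩ X).ncard = 1

/-- The vertex set of the connected component of `G − S` containing `r`. -/
def component (G : SimpleGraph V) (S : Set V) (r : V) : Set V :=
  {x | (gdelete G S).Reachable r x}

/-- `(r, 𝒳)` is a description for `G`. -/
def IsDescription (G : SimpleGraph V) (r : V) (𝒳 : Set (Set V)) : Prop :=
  (∀ X ∈ 𝒳, r ∉ X) ∧ 𝒳.Pairwise Disjoint ∧
    ∀ S : Set V, IsTransversal 𝒳 S →
      (G.induce (component G S r)).IsAcyclic ∧ openNbhd G (component G S r) = S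

/-- The induced tree (given by its vertex set `C`) is described by the description `D`. -/
def Describes (G : SimpleGraph V) (D : V × Set (Set V)) (C : Set V) : Prop :=
  D.1 ∈ C ∧ IsTransversal D.2 (openNbhd G C)

/-- `𝒯_G(𝔛)`: the set of induced trees of `G` described by some member of `𝔛`. -/
def treesOf (G : SimpleGraph V) (𝔛 : Set (V × Set (Set V))) : Set (Set V) :=
  {C | IsInducedTree G C ∧ ∃ D ∈ 𝔛, Describes G D C}

/-- No induced tree of `G` is described by two distinct members of `𝔛`. -/
def NonRedundant (G : SimpleGraph V) (𝔛 : Set (V × Set (Set V))) : Prop :=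
  ∀ C : Set V, IsInducedTree G C → ∀ D₁ ∈ 𝔛, ∀ D₂ ∈ 𝔛,
    Describes G D₁ C → Describes G D₂ C → D₁ = D₂

/-- Degree of a vertex. -/
noncomputable def degOf (G : SimpleGraph V) (v : V) : ℕ := (G.neighborSet v).ncard


/-- No cycle passes through a vertex with at most one neighbor. -/
lemma no_cycle_through {W : Type*} {H : SimpleGraph W} {z y₀ : W}
    (hnb : ∀ b, H.Adj z b → b = y₀) {a : W} {c : H.Walk a a}
    (hc : c.IsCycle) (hz : z ∈ c.support) : False := by
  classical
  have hc' := hc.rotate hz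
  set c' := c.rotate z hz with hc'def
  obtain ⟨b, h₁, p, hcons⟩ := Walk.not_nil_iff.mp hc'.not_nil
  rw [hcons] at hc'
  rw [Walk.cons_isCycle_iff] at hc'
  obtain ⟨hp, hedge⟩ := hc'
  obtain ⟨d, h₂, q, hq⟩ := Walk.exists_eq_cons_of_ne (h₁.ne) p.reverse
  have hb : b = y₀ := hnb b h₁
  have hd : d = y₀ := hnb d h₂
  have hdb : d = b := hd.trans hb.symm
  have : s(z, d) ∈ p.reverse.edges := by
    rw [hq]; simp
  rw [Walk.edges_reverse, List.mem_reverse, hdb] at this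
  exact hedge this

/-- Lift a walk of `G` whose support lies in `S` to a walk of `G.induce S`. -/
def liftWalk {G : SimpleGraph V} {S : Set V} :
    ∀ {a b : V} (p : G.Walk a b) (h : ∀ z ∈ p.support, z ∈ S),
      (G.induce S).Walk ⟨a, h a p.start_mem_support⟩ ⟨b, h b p.end_mem_support⟩
  | _, _, Walk.nil, _ => Walk.nil
  | _, _, Walk.cons hadj p, h =>
      Walk.cons (by exact hadj)
        (liftWalk p (fun z hz => h z (by simp [Walk.support_cons, hz])))

lemma liftWalk_map {G : SimpleGraph V} {S : Set V} :
    ∀ {a b : V} (p : G.Walk a b) (h : ∀ z ∈ p.support, z ∈ S),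
      (liftWalk p h).map (Embedding.induce S).toHom = p
  | _, _, Walk.nil, _ => rfl
  | _, _, Walk.cons hadj p, h => by
      simp only [liftWalk, Walk.map_cons]
      congr 1
      exact congrArg (Walk.cons hadj) (liftWalk_map p _)

/-- Adding a pendant vertex to an induced tree gives an induced tree. -/
lemma isTree_insert {G : SimpleGraph V} {S : Set V} {x y : V}
    (hx : x ∉ S) (hyS : y ∈ S) (hxy : G.Adj x y)
    (hnb : ∀ z, G.Adj x z → z = y) (hT : (G.induce S).IsTree) :
    (G.induce (insert x S)).IsTree := by
  constructor
  · -- connected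
    have h1 : (G.induce {x, y}).Connected := induce_pair_connected_of_adj hxy
    have h2 : (G.induce ({x, y} ∪ S)).Connected :=
      induce_union_connected h1.preconnected hT.isConnected.preconnected ⟨y, by simp, hyS⟩
    have : ({x, y} : Set V) ∪ S = insert x S := by
      ext z; simp only [Set.mem_union, Set.mem_insert_iff, Set.mem_singleton_iff]
      constructor
      · rintro ((rfl | rfl) | hz) <;> simp [hyS, *]
      · rintro (rfl | hz) <;> simp [*]
    rwa [this] at h2
  · -- acyclic
    intro a c hc
    by_cases hxs : (⟨x, Set.mem_insert x S⟩ : ↥(insert x S)) ∈ c.support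
    · refine no_cycle_through (z := (⟨x, Set.mem_insert x S⟩ : ↥(insert x S)))
        (y₀ := (⟨y, Set.mem_insert_of_mem x hyS⟩ : ↥(insert x S))) ?_ hc hxs
      intro b hb
      have : G.Adj x b.val := hb
      exact Subtype.ext (hnb b.val this)
    · -- map the cycle down to G, then into G.induce S
      have hinj : Function.Injective (Embedding.induce (insert x S) : G.induce (insert x S) ↪g G) :=
        (Embedding.induce (insert x S)).injective
      have hc' : (c.map (Embedding.induce (insert x S)).toHom).IsCycle := hc.map hinj
      set c' := c.map (Embedding.induce (insert x S)).toHom with hc'def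
      have hsup : ∀ z ∈ c'.support, z ∈ S := by
        intro z hz
        rw [hc'def, Walk.support_map, List.mem_map] at hz
        obtain ⟨b, hb, rfl⟩ := hz
        have hbmem : (b : V) ∈ insert x S := b.2
        rcases hbmem with hbx | hbS
        · exfalso
          have hbeq : b = ⟨x, Set.mem_insert x S⟩ := Subtype.ext hbx
          rw [hbeq] at hb
          exact hxs hb
        · exact hbS
      have hcyc : (liftWalk c' hsup).IsCycle := by
        have hme := liftWalk_map c' hsup
        rw [← Walk.map_isCycle_iff_of_injective (p := liftWalk c' hsup)
          (f := (Embedding.induce S).toHom) (by exact Subtype.val_injective), hme]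
        exact hc'
      exact hT.IsAcyclic _ hcyc



/-- for a degree-1 vertex `v` with unique neighbor `u` and `F ≠ {v}`,
every maximum-weight `k`-secluded supertree of `F` in `G` contains `u` iff it
contains `v`. -/
theorem leaf_iff_neighbor_in_max [Fintype V] (G : SimpleGraph V) (w : V → ℕ)
    (hw : ∀ x : V, 0 < w x) (k : ℕ) (F : Set V) (hF : F.Nonempty)
    (v u : V) (hvu : G.neighborSet v = {u}) (hFv : F ≠ {v})
    (H : Set V) (hH : H ∈ maxset w (secl G k F)) :
    u ∈ H ↔ v ∈ H := by
  obtain ⟨⟨⟨hTree, hNb⟩, hFH⟩, hmax⟩ := hH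
  have hadj : G.Adj v u := by
    have : u ∈ G.neighborSet v := by rw [hvu]; exact rfl
    exact this
  have hnb : ∀ z, G.Adj v z → z = u := fun z hz => by
    have : z ∈ G.neighborSet v := hz
    rwa [hvu, Set.mem_singleton_iff] at this
  constructor
  · intro hu
    by_contra hv
    have hT' : IsInducedTree G (insert v H) := isTree_insert hv hu hadj hnb hTree
    have hopen : openNbhd G (insert v H) ⊆ openNbhd G H := by
      rintro z ⟨hzH', t, htH', hzt⟩
      have hzH : z ∉ H := fun h => hzH' (Set.mem_insert_of_mem _ h)
      rcases htH' with rfl | htH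
      · exact absurd ((hnb z hzt.symm) ▸ hu) hzH
      · exact ⟨hzH, t, htH, hzt⟩
    have hsecl : insert v H ∈ secl G k F :=
      ⟨⟨hT', le_trans (Set.ncard_le_ncard hopen (Set.toFinite _)) hNb⟩,
        hFH.trans (Set.subset_insert _ _)⟩
    have hle := hmax (insert v H) hsecl
    have heq : weight w (insert v H) = w v + weight w H :=
      finsum_mem_insert w hv (Set.toFinite H)
    rw [heq] at hle
    have := hw v
    omega
  · intro hv
    by_contra hu
    have hsub : H ⊆ {v} := by
      intro z hz
      by_contra hzv
      rw [Set.mem_singleton_iff] at hzv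
      have hne' : (⟨v, hv⟩ : ↥H) ≠ ⟨z, hz⟩ := by
        intro h
        have hvz : v = z := congrArg Subtype.val h
        exact hzv hvz.symm
      obtain ⟨p⟩ := hTree.isConnected.preconnected ⟨v, hv⟩ ⟨z, hz⟩
      obtain ⟨b, hb, q, hq⟩ := Walk.exists_eq_cons_of_ne hne' p
      have hbv : G.Adj v b.val := hb
      exact hu ((hnb _ hbv) ▸ b.2)
    exact hFv (hF.subset_singleton_iff.mp (hFH.trans hsub))

end Secluded
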